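/- Let n ≥ 1. Let ψ : ℝⁿ → ℝ be twice continuously differentiable with |∇ψ(x)|² = 1 for all x (eikonal equation), let a : ℝ × ℝⁿ → ℂ be twice continuously differentiable and satisfy the transport equation ∂ₜa(t,x) + ⟨∇ψ(x), ∇ₓa(t,x)⟩ + (1/2) a(t,x) Δψ(x) = 0 for all (t,x), let q : ℝⁿ → ℂ, and let λ > 0. Define u(t,x) = a(2λt, x) · exp(iλ(ψ(x) − λt)). Then for all (t,x), i ∂ₜu(t,x) + Δu(t,x) + q(x) u(t,x) = exp(iλ(ψ(x) − λt)) · [ (Δₓa)(2λt,x) + q(x) a(2λt,x) ]. -/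

import Mathlib

open MeasureTheory Complex

noncomputable section

/-- Partial derivative in the `j`-th coordinate direction of a complex-valued
function on `ℝⁿ`. -/
def pd {n : ℕ} (j : Fin n) (f : EuclideanSpace ℝ (Fin n) → ℂ)
    (x : EuclideanSpace ℝ (Fin n)) : ℂ :=
  fderiv ℝ f x (EuclideanSpace.single j 1)

/-- Partial derivative in the `j`-th coordinate direction of a real-valued
function on `ℝⁿ`. -/
def pdR {n : ℕ} (j : Fin n) (f : EuclideanSpace ℝ (Fin n) → ℝ)
    (x : EuclideanSpace ℝ (Fin n)) : ℝ :=
  fderiv ℝ f x (EuclideanSpace.single j 1)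

/-- Euclidean Laplacian `Σⱼ ∂²/∂xⱼ²` of a complex-valued function on `ℝⁿ`. -/
def lapC {n : ℕ} (f : EuclideanSpace ℝ (Fin n) → ℂ)
    (x : EuclideanSpace ℝ (Fin n)) : ℂ :=
  ∑ j, pd j (pd j f) x

/-- Euclidean Laplacian `Σⱼ ∂²/∂xⱼ²` of a real-valued function on `ℝⁿ`. -/
def lapR {n : ℕ} (f : EuclideanSpace ℝ (Fin n) → ℝ)
    (x : EuclideanSpace ℝ (Fin n)) : ℝ :=
  ∑ j, pdR j (pdR j f) x

variable {n : ℕ}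

lemma pd_contDiff {f : EuclideanSpace ℝ (Fin n) → ℂ} (hf : ContDiff ℝ 2 f) (j : Fin n) :
    ContDiff ℝ 1 (pd j f) :=
  (hf.fderiv_right (by norm_num)).clm_apply contDiff_const

lemma pdR_contDiff {f : EuclideanSpace ℝ (Fin n) → ℝ} (hf : ContDiff ℝ 2 f) (j : Fin n) :
    ContDiff ℝ 1 (pdR j f) :=
  (hf.fderiv_right (by norm_num)).clm_apply contDiff_const

lemma pd_mul {f g : EuclideanSpace ℝ (Fin n) → ℂ} {x} (hf : DifferentiableAt ℝ f x)
    (hg : DifferentiableAt ℝ g x) (j : Fin n) :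
    pd j (fun y => f y * g y) x = pd j f x * g x + f x * pd j g x := by
  unfold pd
  rw [fderiv_fun_mul hf hg]
  simp
  ring

lemma pd_add {f g : EuclideanSpace ℝ (Fin n) → ℂ} {x} (hf : DifferentiableAt ℝ f x)
    (hg : DifferentiableAt ℝ g x) (j : Fin n) :
    pd j (fun y => f y + g y) x = pd j f x + pd j g x := by
  unfold pd
  rw [fderiv_fun_add hf hg]; simp

lemma pd_ofReal {ψ : EuclideanSpace ℝ (Fin n) → ℝ} {x} (hψ : DifferentiableAt ℝ ψ x) (j : Fin n) :
    pd j (fun y => ((ψ y : ℝ) : ℂ)) x = (pdR j ψ x : ℂ) := by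
  unfold pd pdR
  have h : (fun y => ((ψ y : ℝ) : ℂ)) = (⇑Complex.ofRealCLM ∘ ψ) := rfl
  rw [h, (Complex.ofRealCLM.hasFDerivAt.comp x hψ.hasFDerivAt).fderiv]
  simp

lemma pd_const_mul {g : EuclideanSpace ℝ (Fin n) → ℂ} {x} (hg : DifferentiableAt ℝ g x)
    (c : ℂ) (j : Fin n) :
    pd j (fun y => c * g y) x = c * pd j g x := by
  unfold pd
  rw [fderiv_const_mul hg c]; simp

lemma hasFDerivAt_expPhase {ψ : EuclideanSpace ℝ (Fin n) → ℝ} {x}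
    (hψ : DifferentiableAt ℝ ψ x) (c d : ℂ) :
    HasFDerivAt (fun y => Complex.exp (c * ((ψ y : ℝ) : ℂ) + d))
      ((Complex.exp (c * ((ψ x : ℝ) : ℂ) + d) * c) • ((Complex.ofRealCLM).comp (fderiv ℝ ψ x))) x := by
  have h1 : HasFDerivAt (fun y => c * ((ψ y : ℝ) : ℂ) + d)
      (c • ((Complex.ofRealCLM).comp (fderiv ℝ ψ x))) x :=
    ((Complex.ofRealCLM.hasFDerivAt.comp x hψ.hasFDerivAt).const_mul c).add_const d
  have h2 := h1.cexp
  rw [smul_smul] at h2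
  exact h2

lemma pd_expPhase {ψ : EuclideanSpace ℝ (Fin n) → ℝ} {x}
    (hψ : DifferentiableAt ℝ ψ x) (c d : ℂ) (j : Fin n) :
    pd j (fun y => Complex.exp (c * ((ψ y : ℝ) : ℂ) + d)) x
      = Complex.exp (c * ((ψ x : ℝ) : ℂ) + d) * c * (pdR j ψ x : ℂ) := by
  unfold pd pdR
  rw [(hasFDerivAt_expPhase hψ c d).fderiv]
  simp

lemma key_spatial {F : EuclideanSpace ℝ (Fin n) → ℂ} (hF : ContDiff ℝ 2 F)
    {ψ : EuclideanSpace ℝ (Fin n) → ℝ} (hψ : ContDiff ℝ 2 ψ) (c d : ℂ)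
    (x : EuclideanSpace ℝ (Fin n)) (j : Fin n) :
    pd j (pd j (fun y => F y * Complex.exp (c * ((ψ y : ℝ) : ℂ) + d))) x
      = Complex.exp (c * ((ψ x : ℝ) : ℂ) + d) *
          (pd j (pd j F) x + 2 * c * ((pdR j ψ x : ℝ) : ℂ) * pd j F x
            + c ^ 2 * ((pdR j ψ x : ℝ) : ℂ) ^ 2 * F x
            + c * ((pdR j (pdR j ψ) x : ℝ) : ℂ) * F x) := by
  set e : EuclideanSpace ℝ (Fin n) → ℂ := fun y => Complex.exp (c * ((ψ y : ℝ) : ℂ) + d) with he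
  have hψd : ∀ y, DifferentiableAt ℝ ψ y := fun y =>
    (hψ.differentiable (by norm_num)).differentiableAt
  have hed : ∀ y, DifferentiableAt ℝ e y := fun y => (hasFDerivAt_expPhase (hψd y) c d).differentiableAt
  have hFd : ∀ y, DifferentiableAt ℝ F y := fun y =>
    (hF.differentiable (by norm_num)).differentiableAt
  have hpdFd : ∀ y, DifferentiableAt ℝ (pd j F) y := fun y =>
    ((pd_contDiff hF j).differentiable (by norm_num)).differentiableAt
  have hpdRd : ∀ y, DifferentiableAt ℝ (fun z => ((pdR j ψ z : ℝ) : ℂ)) y := fun y =>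
    Complex.ofRealCLM.differentiable.differentiableAt.comp y
      (((pdR_contDiff hψ j).differentiable (by norm_num)).differentiableAt)
  -- first derivative as a function
  have h1 : pd j (fun y => F y * e y)
      = fun y => pd j F y * e y + (F y * e y) * (c * ((pdR j ψ y : ℝ) : ℂ)) := by
    funext y
    rw [pd_mul (hFd y) (hed y) j, pd_expPhase (hψd y) c d j]
    ring
  rw [h1]
  have hA : DifferentiableAt ℝ (fun y => pd j F y * e y) x := (hpdFd x).mul (hed x)
  have hB : DifferentiableAt ℝ (fun y => (F y * e y) * (c * ((pdR j ψ y : ℝ) : ℂ))) x :=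
    ((hFd x).mul (hed x)).mul ((hpdRd x).const_mul c)
  rw [pd_add hA hB j, pd_mul (hpdFd x) (hed x) j,
      pd_mul (f := fun y => F y * e y) ((hFd x).mul (hed x)) ((hpdRd x).const_mul c) j,
      pd_mul (hFd x) (hed x) j, pd_expPhase (hψd x) c d j,
      pd_const_mul (hpdRd x) c j, pd_ofReal (((pdR_contDiff hψ j).differentiable (by norm_num)).differentiableAt) j]
  ring


/-- If `ψ` solves the eikonal equation `|∇ψ|² = 1` and `a` solves the transport
equation `∂ₜa + ⟨∇ψ, ∇ₓa⟩ + (1/2) a Δψ = 0`, then the WKB ansatz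
`u(t,x) = a(2λt,x) e^{iλ(ψ(x)−λt)}` satisfies
`i ∂ₜu + Δu + q u = e^{iλ(ψ−λt)} [Δₓa + q a]` evaluated at `(2λt, x)`. -/
theorem stmt7 {n : ℕ} (hn : 1 ≤ n)
    (ψ : EuclideanSpace ℝ (Fin n) → ℝ) (hψ : ContDiff ℝ 2 ψ)
    (heik : ∀ x, ∑ j, (pdR j ψ x) ^ 2 = 1)
    (a : ℝ × EuclideanSpace ℝ (Fin n) → ℂ) (ha : ContDiff ℝ 2 a)
    (htransport : ∀ (t : ℝ) (x : EuclideanSpace ℝ (Fin n)),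
      deriv (fun s => a (s, x)) t
        + (∑ j, ((pdR j ψ x : ℝ) : ℂ) * pd j (fun y => a (t, y)) x)
        + (1/2 : ℂ) * a (t, x) * ((lapR ψ x : ℝ) : ℂ) = 0)
    (q : EuclideanSpace ℝ (Fin n) → ℂ) (lam : ℝ) (hlam : 0 < lam)
    (u : ℝ × EuclideanSpace ℝ (Fin n) → ℂ)
    (hu : ∀ p : ℝ × EuclideanSpace ℝ (Fin n),
      u p = a (2 * lam * p.1, p.2)
        * Complex.exp (Complex.I * (lam : ℂ) * ((ψ p.2 : ℂ) - (lam : ℂ) * (p.1 : ℂ)))) :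
    ∀ (t : ℝ) (x : EuclideanSpace ℝ (Fin n)),
      Complex.I * deriv (fun s => u (s, x)) t + lapC (fun y => u (t, y)) x
          + q x * u (t, x)
        = Complex.exp (Complex.I * (lam : ℂ) * ((ψ x : ℂ) - (lam : ℂ) * (t : ℂ)))
          * (lapC (fun y => a (2 * lam * t, y)) x + q x * a (2 * lam * t, x)) := by
  intro t x
  set c : ℂ := Complex.I * (lam : ℂ) with hc
  set d : ℂ := -(Complex.I * (lam : ℂ) * ((lam : ℂ) * (t : ℂ))) with hd
  set F : EuclideanSpace ℝ (Fin n) → ℂ := fun y => a (2 * lam * t, y) with hF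
  have hFcd : ContDiff ℝ 2 F := ha.comp (contDiff_const.prodMk contDiff_id)
  set E : ℂ := Complex.exp (Complex.I * (lam : ℂ) * ((ψ x : ℂ) - (lam : ℂ) * (t : ℂ))) with hE
  have hEeq : E = Complex.exp (c * ((ψ x : ℝ) : ℂ) + d) := by
    rw [hE]; congr 1; rw [hc, hd]; ring
  -- Laplacian computation
  have hfun : (fun y => u (t, y)) = fun y => F y * Complex.exp (c * ((ψ y : ℝ) : ℂ) + d) := by
    funext y
    rw [hu (t, y)]
    congr 2
    rw [hc, hd]; ring
  set S : ℂ := ∑ j, ((pdR j ψ x : ℝ) : ℂ) * pd j F x with hS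
  set L : ℂ := lapC F x with hL
  set P : ℂ := ((lapR ψ x : ℝ) : ℂ) with hP
  have heikC : (∑ j, ((pdR j ψ x : ℝ) : ℂ) ^ 2) = 1 := by
    exact_mod_cast heik x
  have hlap : lapC (fun y => u (t, y)) x
      = E * (L + 2 * c * S + c ^ 2 * F x + c * P * F x) := by
    rw [hfun]
    unfold lapC
    have : ∀ j : Fin n, pd j (pd j (fun y => F y * Complex.exp (c * ((ψ y : ℝ) : ℂ) + d))) x
        = Complex.exp (c * ((ψ x : ℝ) : ℂ) + d) *
          (pd j (pd j F) x + 2 * c * ((pdR j ψ x : ℝ) : ℂ) * pd j F x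
            + c ^ 2 * ((pdR j ψ x : ℝ) : ℂ) ^ 2 * F x
            + c * ((pdR j (pdR j ψ) x : ℝ) : ℂ) * F x) := fun j =>
      key_spatial hFcd hψ c d x j
    rw [Finset.sum_congr rfl (fun j _ => this j), ← Finset.mul_sum, ← hEeq]
    congr 1
    have e1 : 2 * c * S = ∑ j, 2 * c * ((pdR j ψ x : ℝ) : ℂ) * pd j F x := by
      rw [hS, Finset.mul_sum]
      exact Finset.sum_congr rfl fun j _ => by ring
    have e2 : c ^ 2 * F x = ∑ j, c ^ 2 * ((pdR j ψ x : ℝ) : ℂ) ^ 2 * F x := by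
      calc c ^ 2 * F x = c ^ 2 * F x * (∑ j, ((pdR j ψ x : ℝ) : ℂ) ^ 2) := by
            rw [heikC]; ring
        _ = ∑ j, c ^ 2 * ((pdR j ψ x : ℝ) : ℂ) ^ 2 * F x := by
            rw [Finset.mul_sum]
            exact Finset.sum_congr rfl fun j _ => by ring
    have e3 : c * P * F x = ∑ j, c * ((pdR j (pdR j ψ) x : ℝ) : ℂ) * F x := by
      rw [hP]
      unfold lapR
      push_cast
      rw [Finset.mul_sum, Finset.sum_mul]
    rw [e1, e2, e3, hL]
    unfold lapC
    rw [← Finset.sum_add_distrib, ← Finset.sum_add_distrib, ← Finset.sum_add_distrib]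
  -- time derivative
  have hax : ContDiff ℝ 2 (fun s : ℝ => a (s, x)) := ha.comp (contDiff_id.prodMk contDiff_const)
  set d0 : ℂ := deriv (fun s => a (s, x)) (2 * lam * t) with hd0
  have hg : HasDerivAt (fun s : ℝ => a (s, x)) d0 (2 * lam * t) :=
    ((hax.differentiable (by norm_num)).differentiableAt).hasDerivAt
  have hinner : HasDerivAt (fun s : ℝ => 2 * lam * s) (2 * lam) t := by
    simpa using (hasDerivAt_id t).const_mul (2 * lam)
  have h1 : HasDerivAt (fun s : ℝ => a (2 * lam * s, x)) ((2 * lam : ℝ) • d0) t :=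
    hg.scomp t hinner
  have hsC : HasDerivAt (fun s : ℝ => ((s : ℝ) : ℂ)) 1 t := by
    simpa using (hasDerivAt_id t).ofReal_comp
  have h2exp : HasDerivAt
      (fun s : ℝ => Complex.exp (Complex.I * (lam : ℂ) * ((ψ x : ℂ) - (lam : ℂ) * ((s : ℝ) : ℂ))))
      (E * (-(Complex.I) * (lam : ℂ) ^ 2)) t := by
    have hb : HasDerivAt (fun s : ℝ => (ψ x : ℂ) - (lam : ℂ) * ((s : ℝ) : ℂ))
        (-((lam : ℂ) * 1)) t := (hsC.const_mul (lam : ℂ)).const_sub ((ψ x : ℂ))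
    have hc2 := (hb.const_mul (Complex.I * (lam : ℂ))).cexp
    convert hc2 using 1
    rw [hE]
    ring
  have hprod := h1.mul h2exp
  have hueq : (fun s : ℝ => u (s, x))
      = fun s : ℝ => a (2 * lam * s, x)
          * Complex.exp (Complex.I * (lam : ℂ) * ((ψ x : ℂ) - (lam : ℂ) * ((s : ℝ) : ℂ))) := by
    funext s
    rw [hu (s, x)]
  have hderiv : deriv (fun s => u (s, x)) t
      = (2 * lam : ℝ) • d0 * E + a (2 * lam * t, x) * (E * (-(Complex.I) * (lam : ℂ) ^ 2)) := by
    rw [hueq]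
    exact hprod.deriv
  -- transport equation at (2λt, x)
  have htr := htransport (2 * lam * t) x
  rw [show (fun y => a (2 * lam * t, y)) = F from rfl, ← hS, ← hd0,
      show a (2 * lam * t, x) = F x from rfl, ← hP] at htr
  -- assemble
  rw [hderiv, hlap, hu (t, x)]
  simp only [show ((t, x) : ℝ × EuclideanSpace ℝ (Fin n)).1 = t from rfl,
    show ((t, x) : ℝ × EuclideanSpace ℝ (Fin n)).2 = x from rfl]
  rw [show a (2 * lam * t, x) = F x from rfl, Complex.real_smul, hc]
  push_cast
  linear_combination (2 * Complex.I * (lam : ℂ) * E) * htr
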